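/- Let A be an automorphism of the d-regular rooted tree acting transitively on levels and B a tree endomorphism. Define Log_{A,n}(B)(w) = d_{A,n}(w, B(w)) ∈ ℤ/d^nℤ, identified with a word of length n via d-ary expansion. Then the map L : X* → X* given on level n by Log_{A,n}(B) is an endomorphism of the tree (level-preserving and prefix-compatible). -/

import Mathlib

/-- A (level-preserving, adjacency-preserving) endomorphism of the rooted tree `X*`. -/
def IsEndo {X : Type*} (f : List X → List X) : Prop :=
  (∀ w, (f w).length = w.length) ∧ ∀ w a, ∃ b, f (w ++ [a]) = f w ++ [b]

/-- The natural number `∑ w_i d^i` encoded by a word over `{0,…,d-1}`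
(`d`-ary expansion, least significant digit first). -/
def wordToNat {d : ℕ} (w : List (Fin d)) : ℕ :=
  w.foldr (fun a acc => a.val + d * acc) 0

lemma wordToNat_cons {d : ℕ} (a : Fin d) (t : List (Fin d)) :
    wordToNat (a :: t) = a.val + d * wordToNat t := rfl

lemma wordToNat_lt {d : ℕ} (w : List (Fin d)) : wordToNat w < d ^ w.length := by
  induction w with
  | nil => simp [wordToNat]
  | cons a t ih =>
    have ha : a.val < d := a.isLt
    have : a.val + d * wordToNat t < d * (wordToNat t + 1) := by
      rw [Nat.mul_add, Nat.mul_one]; omega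
    calc wordToNat (a :: t) = a.val + d * wordToNat t := rfl
      _ < d * (wordToNat t + 1) := this
      _ ≤ d * d ^ t.length := Nat.mul_le_mul_left d ih
      _ = d ^ (a :: t).length := by rw [List.length_cons, pow_succ, Nat.mul_comm]

lemma wordToNat_append_singleton {d : ℕ} (u : List (Fin d)) (b : Fin d) :
    wordToNat (u ++ [b]) = wordToNat u + d ^ u.length * b.val := by
  induction u with
  | nil => simp [wordToNat]
  | cons a t ih =>
    simp only [List.cons_append, wordToNat_cons, ih, List.length_cons, pow_succ]
    ring

def natToWord (d : ℕ) (hd : 0 < d) : ℕ → ℕ → List (Fin d)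
  | 0, _ => []
  | n+1, k => ⟨k % d, Nat.mod_lt _ hd⟩ :: natToWord d hd n (k / d)

lemma length_natToWord (d : ℕ) (hd : 0 < d) (n k : ℕ) :
    (natToWord d hd n k).length = n := by
  induction n generalizing k with
  | zero => rfl
  | succ m ih => simp [natToWord, ih]

lemma wordToNat_natToWord (d : ℕ) (hd : 0 < d) (n k : ℕ) (hk : k < d ^ n) :
    wordToNat (natToWord d hd n k) = k := by
  induction n generalizing k with
  | zero => simpa [natToWord, wordToNat] using (Nat.lt_one_iff.mp (by simpa using hk)).symm
  | succ m ih =>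
    have hdiv : k / d < d ^ m := by
      rw [Nat.div_lt_iff_lt_mul hd]
      calc k < d ^ (m + 1) := hk
        _ = d ^ m * d := by rw [pow_succ]
    simp only [natToWord, wordToNat_cons, ih _ hdiv]
    exact Nat.mod_add_div k d

lemma natToWord_wordToNat (d : ℕ) (hd : 0 < d) (w : List (Fin d)) :
    natToWord d hd w.length (wordToNat w) = w := by
  induction w with
  | nil => rfl
  | cons a t ih =>
    simp only [List.length_cons, natToWord, wordToNat_cons]
    congr 1
    · ext
      simp [Nat.add_mul_mod_self_left, Nat.mod_eq_of_lt a.isLt]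
    · rw [Nat.add_mul_div_left _ _ hd, Nat.div_eq_of_lt a.isLt, Nat.zero_add]
      exact ih

lemma wordToNat_inj {d : ℕ} (hd : 0 < d) {u v : List (Fin d)}
    (hlen : u.length = v.length) (h : wordToNat u = wordToNat v) : u = v := by
  have := natToWord_wordToNat d hd u
  rw [hlen, h, natToWord_wordToNat d hd v] at this
  exact this.symm

section Iter

variable {d : ℕ} {A : List (Fin d) → List (Fin d)}

lemma iterate_length (hA : IsEndo A) (k : ℕ) (w : List (Fin d)) :
    (A^[k] w).length = w.length := by
  induction k with
  | zero => rfl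
  | succ m ih => rw [Function.iterate_succ_apply', hA.1, ih]

lemma iterate_append (hA : IsEndo A) (k : ℕ) (w : List (Fin d)) (a : Fin d) :
    ∃ b, A^[k] (w ++ [a]) = A^[k] w ++ [b] := by
  induction k with
  | zero => exact ⟨a, rfl⟩
  | succ m ih =>
    obtain ⟨b, hb⟩ := ih
    obtain ⟨c, hc⟩ := hA.2 (A^[m] w) b
    exact ⟨c, by rw [Function.iterate_succ_apply', hb, hc, Function.iterate_succ_apply']⟩

end Iter

theorem stmt15 (d : ℕ) (hd : 0 < d)
    (A B L : List (Fin d) → List (Fin d))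
    (hA : IsEndo A) (hAbij : Function.Bijective A)
    (htrans : ∀ u v : List (Fin d), u.length = v.length → ∃ k, A^[k] u = v)
    (hB : IsEndo B)
    (hLlen : ∀ w, (L w).length = w.length)
    (hLspec : ∀ w, A^[wordToNat (L w)] w = B w) :
    IsEndo L := by
  have hAinj : Function.Injective A := hAbij.injective
  -- periodicity of points at each level
  have hper : ∀ w : List (Fin d), w ∈ Function.periodicPts A := by
    intro w
    set n := w.length with hn
    -- pigeonhole among d^n + 1 iterates
    have hmap : ∀ i ∈ Finset.range (d ^ n + 1),
        wordToNat (A^[i] w) ∈ Finset.range (d ^ n) := by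
      intro i _
      simp only [Finset.mem_range]
      have := wordToNat_lt (A^[i] w)
      rwa [iterate_length hA] at this
    obtain ⟨i, hi, j, hj, hne, heq⟩ :=
      Finset.exists_ne_map_eq_of_card_lt_of_maps_to (by simp) hmap
    wlog hij : i < j generalizing i j
    · exact this j hj i hi hne.symm heq.symm (by omega)
    have hw : A^[i] w = A^[j] w := by
      apply wordToNat_inj hd _ heq
      rw [iterate_length hA, iterate_length hA]
    have : A^[i] (A^[j - i] w) = A^[i] w := by
      rw [← Function.iterate_add_apply, Nat.add_sub_cancel' hij.le, hw]
    have hper' : A^[j - i] w = w := (hAinj.iterate i) this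
    exact ⟨j - i, by omega, hper'⟩
  -- the minimal period at a word of length n is exactly d ^ n
  have hperiod : ∀ w : List (Fin d), Function.minimalPeriod A w = d ^ w.length := by
    intro w
    set n := w.length with hn
    set p := Function.minimalPeriod A w with hp
    have hppos : 0 < p := Function.minimalPeriod_pos_of_mem_periodicPts (hper w)
    have hinjOn : Set.InjOn (fun i => A^[i] w) (Set.Iio p) :=
      Function.iterate_injOn_Iio_minimalPeriod
    -- p ≤ d ^ n
    have hle : p ≤ d ^ n := by
      have : Set.InjOn (fun i => wordToNat (A^[i] w)) (Set.Iio p) := by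
        intro i hi j hj h
        exact hinjOn hi hj (wordToNat_inj hd (by rw [iterate_length hA, iterate_length hA]) h)
      have hsub : Set.MapsTo (fun i => wordToNat (A^[i] w))
          ↑(Finset.range p) ↑(Finset.range (d ^ n)) := by
        intro i hi
        simp only [Finset.coe_range, Set.mem_Iio]
        have := wordToNat_lt (A^[i] w)
        rwa [iterate_length hA] at this
      have hmaps : ∀ i ∈ Finset.range p, wordToNat (A^[i] w) ∈ Finset.range (d ^ n) := by
        intro i _
        simp only [Finset.mem_range]
        have := wordToNat_lt (A^[i] w)
        rwa [iterate_length hA] at this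
      have hcard := Finset.card_le_card_of_injOn (fun i => wordToNat (A^[i] w)) hmaps
        (fun i hi j hj h => this (by simpa using hi) (by simpa using hj) h)
      simpa using hcard
    -- d ^ n ≤ p
    have hge : d ^ n ≤ p := by
      have hmodper : ∀ m, A^[m % p] w = A^[m] w :=
        fun m => Function.iterate_mod_minimalPeriod_eq
      -- to each k < d ^ n assign a residue mod p hitting natToWord n k
      have hchoice : ∀ k : Fin (d ^ n), ∃ m < p, A^[m] w = natToWord d hd n k := by
        intro k
        obtain ⟨m, hm⟩ := htrans w (natToWord d hd n k) (by rw [length_natToWord])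
        exact ⟨m % p, Nat.mod_lt _ hppos, by rw [hmodper]; exact hm⟩
      choose g hg1 hg2 using hchoice
      have hginj : Function.Injective fun k : Fin (d ^ n) => (⟨g k, hg1 k⟩ : Fin p) := by
        intro k k' h
        simp only [Fin.mk.injEq] at h
        have : natToWord d hd n k = natToWord d hd n k' := by
          rw [← hg2 k, ← hg2 k', h]
        have := congrArg wordToNat this
        rw [wordToNat_natToWord d hd n _ k.isLt, wordToNat_natToWord d hd n _ k'.isLt] at this
        exact Fin.ext this
      simpa using Fintype.card_le_of_injective _ hginj
    omega
  constructor
  · exact hLlen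
  · intro w a
    set n := w.length with hn
    -- decompose L (w ++ [a]) as u ++ [b]
    have hlen' : (L (w ++ [a])).length = n + 1 := by
      rw [hLlen]; simp [hn]
    have hne : L (w ++ [a]) ≠ [] := by
      intro h; rw [h] at hlen'; simp at hlen'
    obtain ⟨u, b, hub⟩ : ∃ u b, L (w ++ [a]) = u ++ [b] :=
      ⟨(L (w ++ [a])).dropLast, (L (w ++ [a])).getLast hne,
        (List.dropLast_append_getLast hne).symm⟩
    have hulen : u.length = n := by
      have := hlen'
      rw [hub, List.length_append, List.length_singleton] at this
      omega
    refine ⟨b, ?_⟩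
    rw [hub]
    congr 1
    -- show u = L w
    have hK : wordToNat (L (w ++ [a])) = wordToNat u + d ^ n * b.val := by
      rw [hub, wordToNat_append_singleton, hulen]
    -- A^[K] (w ++ [a]) = B (w ++ [a]) = B w ++ [c]
    obtain ⟨c, hc⟩ := hB.2 w a
    obtain ⟨b', hb'⟩ := iterate_append hA (wordToNat (L (w ++ [a]))) w a
    have hmain : A^[wordToNat (L (w ++ [a]))] w ++ [b'] = B w ++ [c] := by
      rw [← hb', hLspec, hc]
    have hlens : (A^[wordToNat (L (w ++ [a]))] w).length = (B w).length := by
      rw [iterate_length hA, hB.1]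
    have hAKw : A^[wordToNat (L (w ++ [a]))] w = B w :=
      (List.append_inj hmain hlens).1
    -- reduce exponent mod d ^ n
    have hmodper : ∀ m, A^[m % d ^ n] w = A^[m] w := by
      intro m
      have := Function.iterate_mod_minimalPeriod_eq (f := A) (x := w) (n := m)
      rwa [hperiod w] at this
    have hulb : wordToNat u < d ^ n := by
      have := wordToNat_lt u; rwa [hulen] at this
    have h1 : A^[wordToNat u] w = B w := by
      rw [← Nat.mod_eq_of_lt hulb]
      have : (wordToNat u + d ^ n * b.val) % d ^ n = wordToNat u % d ^ n :=
        Nat.add_mul_mod_self_left _ _ _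
      rw [this.symm, ← hK, hmodper, hAKw]
    have h2 : A^[wordToNat (L w)] w = B w := hLspec w
    have hLwlt : wordToNat (L w) < d ^ n := by
      have := wordToNat_lt (L w); rwa [hLlen] at this
    have hinjOn : Set.InjOn (fun i => A^[i] w) (Set.Iio (d ^ n)) := by
      have := Function.iterate_injOn_Iio_minimalPeriod (f := A) (x := w)
      rwa [hperiod w] at this
    have heq : wordToNat u = wordToNat (L w) :=
      hinjOn hulb hLwlt (h1.trans h2.symm)
    exact wordToNat_inj hd (by rw [hulen, hLlen]) heq
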